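/- arXiv:2501.15093 — 2 statements merged into one kernel-verified Lean document; each statement's English description precedes it below -/
import Mathlib

section
/- Define f₃(b) = 4π ∫₀^π [sin³θ (cosθ + b)] / (1 + cos²θ + 2b cosθ) dθ for b ∈ (-1,1). Then f₃ is differentiable with f₃'(b) = 4π ∫₀^π sin⁵θ / (1 + cos²θ + 2b cosθ)² dθ, and in particular f₃'(b) > 0 for all b ∈ (-1,1). -/
open Real

noncomputable def f₃ (b : ℝ) : ℝ :=
  4 * Real.pi * ∫ θ in (0:ℝ)..Real.pi,
    (Real.sin θ)^3 * (Real.cos θ + b) / (1 + (Real.cos θ)^2 + 2*b*Real.cos θ)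

lemma denom_pos' {x : ℝ} (hx : |x| < 1) (θ : ℝ) :
    0 < 1 + (Real.cos θ)^2 + 2*x*Real.cos θ := by
  obtain ⟨h1, h2⟩ := abs_lt.1 hx
  nlinarith [sq_nonneg (Real.cos θ + x)]

theorem f₃_deriv : ∀ b ∈ Set.Ioo (-1:ℝ) 1,
    HasDerivAt f₃
      (4 * Real.pi * ∫ θ in (0:ℝ)..Real.pi,
        (Real.sin θ)^5 / (1 + (Real.cos θ)^2 + 2*b*Real.cos θ)^2) b ∧
    0 < 4 * Real.pi * ∫ θ in (0:ℝ)..Real.pi,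
        (Real.sin θ)^5 / (1 + (Real.cos θ)^2 + 2*b*Real.cos θ)^2 := by
  intro b hb
  obtain ⟨hb1, hb2⟩ := hb
  have hab : |b| < 1 := abs_lt.2 ⟨hb1, hb2⟩
  set ε : ℝ := (1 - |b|)/2 with hεdef
  have hεpos : 0 < ε := by have := abs_nonneg b; simp only [hεdef]; linarith
  have hball : ∀ x ∈ Metric.ball b ε, |x| < 1 := by
    intro x hx
    rw [Metric.mem_ball, Real.dist_eq] at hx
    calc |x| ≤ |x - b| + |b| := by
            have := abs_sub_abs_le_abs_sub x b; linarith
      _ < ε + |b| := by linarith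
      _ < 1 := by simp only [hεdef]; linarith
  set c : ℝ := 1 - ((1 + |b|)/2)^2 with hcdef
  have hc : 0 < c := by
    have := abs_nonneg b
    simp only [hcdef]; nlinarith
  have hD : ∀ x ∈ Metric.ball b ε, ∀ θ : ℝ,
      c ≤ 1 + (Real.cos θ)^2 + 2*x*Real.cos θ := by
    intro x hx θ
    rw [Metric.mem_ball, Real.dist_eq] at hx
    have h1 : |x| ≤ (1 + |b|)/2 := by
      have := abs_sub_abs_le_abs_sub x b
      simp only [hεdef] at hx; linarith
    have h2 : x^2 ≤ ((1 + |b|)/2)^2 := by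
      rw [← sq_abs x]; exact pow_le_pow_left₀ (abs_nonneg x) h1 2
    simp only [hcdef]
    nlinarith [sq_nonneg (Real.cos θ + x)]
  -- continuity of integrands
  have hcont : ∀ x : ℝ, |x| < 1 → Continuous
      (fun θ => (Real.sin θ)^3 * (Real.cos θ + x) / (1 + (Real.cos θ)^2 + 2*x*Real.cos θ)) := by
    intro x hx
    apply Continuous.div
    · fun_prop
    · fun_prop
    · intro θ; exact ne_of_gt (denom_pos' hx θ)
  have hcont' : ∀ x : ℝ, |x| < 1 → Continuous
      (fun θ => (Real.sin θ)^5 / (1 + (Real.cos θ)^2 + 2*x*Real.cos θ)^2) := by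
    intro x hx
    apply Continuous.div
    · fun_prop
    · fun_prop
    · intro θ; exact ne_of_gt (pow_pos (denom_pos' hx θ) 2)
  have key := intervalIntegral.hasDerivAt_integral_of_dominated_loc_of_deriv_le
    (F := fun x θ => (Real.sin θ)^3 * (Real.cos θ + x) / (1 + (Real.cos θ)^2 + 2*x*Real.cos θ))
    (F' := fun x θ => (Real.sin θ)^5 / (1 + (Real.cos θ)^2 + 2*x*Real.cos θ)^2)
    (x₀ := b) (a := (0:ℝ)) (b := Real.pi) (μ := MeasureTheory.volume)
    (bound := fun _ => 1/c^2) (Metric.ball_mem_nhds b hεpos)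
    (by
      filter_upwards [Metric.ball_mem_nhds b hεpos] with x hx
      exact ((hcont x (hball x hx)).aestronglyMeasurable))
    ((hcont b hab).intervalIntegrable 0 Real.pi)
    ((hcont' b hab).aestronglyMeasurable)
    (by
      filter_upwards with θ _ x hx
      have hd := hD x hx θ
      have hd2 : c^2 ≤ (1 + (Real.cos θ)^2 + 2*x*Real.cos θ)^2 :=
        pow_le_pow_left₀ hc.le hd 2
      rw [Real.norm_eq_abs, abs_div, abs_pow, abs_pow]
      have hnum : |Real.sin θ|^5 ≤ 1 := by
        apply pow_le_one₀ (abs_nonneg _) (abs_sin_le_one θ)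
      have hpos2 : 0 < (1 + (Real.cos θ)^2 + 2*x*Real.cos θ)^2 :=
        pow_pos (denom_pos' (hball x hx) θ) 2
      rw [abs_of_pos (denom_pos' (hball x hx) θ)]
      exact div_le_div₀ zero_le_one hnum (pow_pos hc 2) hd2)
    (intervalIntegrable_const)
    (by
      filter_upwards with θ _ x hx
      have hdpos := denom_pos' (hball x hx) θ
      have h1 : HasDerivAt (fun y : ℝ => (Real.sin θ)^3 * (Real.cos θ + y))
          ((Real.sin θ)^3) x := by
        simpa using ((hasDerivAt_id x).const_add (Real.cos θ)).const_mul ((Real.sin θ)^3)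
      have h2 : HasDerivAt (fun y : ℝ => 1 + (Real.cos θ)^2 + 2*y*Real.cos θ)
          (2*Real.cos θ) x := by
        have : HasDerivAt (fun y : ℝ => 2*y*Real.cos θ) (2*Real.cos θ) x := by
          simpa [mul_comm, mul_assoc] using
            (hasDerivAt_id x).const_mul (2*Real.cos θ)
        simpa using this.const_add (1 + (Real.cos θ)^2)
      have h3 := h1.div h2 (ne_of_gt hdpos)
      have hs : Real.sin θ^2 = 1 - Real.cos θ^2 := Real.sin_sq θ
      convert h3 using 2
      · rfl
      · rfl
      · linear_combination (Real.sin θ)^3 * hs)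
  constructor
  · exact key.2.const_mul (4 * Real.pi)
  · apply mul_pos (by positivity)
    apply intervalIntegral.intervalIntegral_pos_of_pos_on
      ((hcont' b hab).intervalIntegrable 0 Real.pi)
    · intro θ hθ
      have hs : 0 < Real.sin θ := Real.sin_pos_of_pos_of_lt_pi hθ.1 hθ.2
      have hd := denom_pos' hab θ
      positivity
    · exact Real.pi_pos
end

section
/- Let μ₂ > 0 and let γ̄ > 0, and let β̄ ∈ (0, γ̄] satisfy β̄² + β̄ < μ₂. Suppose y : [1,∞) → ℝ is a continuous nonnegative bounded function, differentiable twice wherever y > 0, satisfying the differential inequality -y''(t) + y'(t) + μ₂ y(t) ≤ K e^{-γ̄ t} at every t ≥ 1 with y(t) > 0, for some constant K ≥ 0. Then there exists a constant B (depending on K, y(1), μ₂, β̄) such that y(t) ≤ B e^{-β̄(t-1)} for all t ≥ 1. -/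
open Filter Set Topology

set_option maxHeartbeats 2000000 in
theorem ode_comparison (μ₂ γ K β : ℝ) (hμ : 0 < μ₂) (hγ : 0 < γ)
    (hβ0 : 0 < β) (hβγ : β ≤ γ) (hβμ : β^2 + β < μ₂) (hK : 0 ≤ K)
    (y y' y'' : ℝ → ℝ)
    (hcont : ContinuousOn y (Set.Ici (1:ℝ)))
    (hnonneg : ∀ t, 1 ≤ t → 0 ≤ y t)
    (hbdd : ∃ M, ∀ t, 1 ≤ t → y t ≤ M)
    (hdiff : ∀ t, 1 ≤ t → 0 < y t →
      HasDerivAt y (y' t) t ∧ HasDerivAt y' (y'' t) t ∧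
        -(y'' t) + y' t + μ₂ * y t ≤ K * Real.exp (-γ * t)) :
    ∃ B : ℝ, ∀ t, 1 ≤ t → y t ≤ B * Real.exp (-β * (t - 1)) := by
  classical
  obtain ⟨M, hM⟩ := hbdd
  have hc : 0 < μ₂ - β ^ 2 - β := by nlinarith
  set B : ℝ := K / (μ₂ - β ^ 2 - β) + y 1 + 1 with hBdef
  have hy1 : 0 ≤ y 1 := hnonneg 1 le_rfl
  have hKd : 0 ≤ K / (μ₂ - β ^ 2 - β) := div_nonneg hK hc.le
  have hyB : y 1 < B := by rw [hBdef]; linarith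
  have hKB : K ≤ (μ₂ - β ^ 2 - β) * B := by
    have h1 : (μ₂ - β ^ 2 - β) * (K / (μ₂ - β ^ 2 - β)) = K := by field_simp
    have h2 : 0 ≤ (μ₂ - β ^ 2 - β) * (y 1 + 1) := by positivity
    rw [hBdef]; nlinarith
  refine ⟨B, ?_⟩
  have hBpos : 0 < B := by linarith
  set z : ℝ → ℝ := fun t => B * Real.exp (-β * (t - 1)) with hzdef
  have hzpos : ∀ t, 0 < z t := fun t => mul_pos hBpos (Real.exp_pos _)
  have hz' : ∀ t, HasDerivAt z (-β * z t) t := by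
    intro t
    have h1 : HasDerivAt (fun s : ℝ => -β * (s - 1)) (-β) t := by
      simpa using ((hasDerivAt_id t).sub_const 1).const_mul (-β)
    have h2 := h1.exp.const_mul B
    refine h2.congr_deriv ?_
    simp only [hzdef]; ring
  have hzcont : Continuous z := by
    apply Continuous.mul continuous_const
    exact Real.continuous_exp.comp (by continuity)
  have hkey : ∀ t, 1 ≤ t → K * Real.exp (-γ * t) ≤ (μ₂ - β ^ 2 - β) * z t := by
    intro t ht
    have he : Real.exp (-γ * t) ≤ Real.exp (-β * (t - 1)) :=
      Real.exp_le_exp.mpr (by nlinarith)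
    calc K * Real.exp (-γ * t) ≤ K * Real.exp (-β * (t - 1)) :=
          mul_le_mul_of_nonneg_left he hK
      _ ≤ ((μ₂ - β ^ 2 - β) * B) * Real.exp (-β * (t - 1)) :=
          mul_le_mul_of_nonneg_right hKB (Real.exp_pos _).le
      _ = (μ₂ - β ^ 2 - β) * z t := by simp only [hzdef]; ring
  -- main claim with ε slack
  have main : ∀ ε : ℝ, 0 < ε → ∀ t, 1 ≤ t → y t ≤ z t + ε * t := by
    intro ε hε
    by_contra hcon
    push_neg at hcon
    obtain ⟨t₀, ht₀, hy₀⟩ := hcon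
    set φ : ℝ → ℝ := fun t => y t - z t - ε * t with hφdef
    have hφ₀ : 0 < φ t₀ := by simp only [hφdef]; linarith
    set T : ℝ := max t₀ (M / ε) with hTdef
    have ht₀T : t₀ ≤ T := le_max_left _ _
    have hT1 : 1 ≤ T := le_trans ht₀ ht₀T
    have hlarge : ∀ s, T < s → φ s < 0 := by
      intro s hs
      have h1s : 1 ≤ s := le_trans hT1 hs.le
      have hMs : M < ε * s := by
        have h2 : M / ε < s := lt_of_le_of_lt (le_max_right _ _) hs
        rw [div_lt_iff₀ hε] at h2; linarith
      have h3 := hM s h1s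
      have h4 := hzpos s
      simp only [hφdef]; linarith
    have hφcont : ContinuousOn φ (Set.Icc 1 T) := by
      apply ContinuousOn.sub
      · exact (hcont.mono (fun s hs => hs.1)).sub (hzcont.continuousOn)
      · exact (continuous_const.mul continuous_id).continuousOn
    obtain ⟨t', ht'mem, ht'max⟩ :=
      isCompact_Icc.exists_isMaxOn ⟨t₀, ht₀, ht₀T⟩ hφcont
    have hmax : ∀ s, s ∈ Set.Icc (1:ℝ) T → φ s ≤ φ t' := isMaxOn_iff.mp ht'max
    have hφt' : 0 < φ t' := lt_of_lt_of_le hφ₀ (hmax t₀ ⟨ht₀, ht₀T⟩)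
    have ht'1 : 1 < t' := by
      rcases lt_or_eq_of_le ht'mem.1 with h | h
      · exact h
      · exfalso
        have : φ 1 = y 1 - z 1 - ε := by simp only [hφdef]; ring_nf
        have hz1 : z 1 = B := by simp [hzdef]
        have : φ 1 < 0 := by
          simp only [hφdef, hz1]
          nlinarith
        rw [← h] at hφt'; linarith
    have hyt'pos : 0 < y t' := by
      have := hzpos t'
      have h5 : 0 < ε * t' := by nlinarith
      simp only [hφdef] at hφt'; linarith
    have hyzt' : z t' ≤ y t' := by
      have h5 : 0 < ε * t' := by nlinarith
      simp only [hφdef] at hφt'; linarith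
    -- local max of φ at t'
    have hlocmax : IsLocalMax φ t' := by
      filter_upwards [Ioi_mem_nhds ht'1] with s hs
      rcases le_or_gt s T with h | h
      · exact hmax s ⟨le_of_lt hs, h⟩
      · exact le_of_lt (lt_trans (hlarge s h) hφt')
    obtain ⟨hy'd, hy''d, hode⟩ := hdiff t' ht'mem.1 hyt'pos
    -- derivative of φ at points where y > 0
    set φd : ℝ → ℝ := fun s => y' s - -β * z s - ε with hφddef
    have hφderiv : ∀ s, 1 ≤ s → 0 < y s → HasDerivAt φ (φd s) s := by
      intro s h1s hys
      obtain ⟨h1, _, _⟩ := hdiff s h1s hys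
      have := (h1.sub (hz' s)).sub ((hasDerivAt_id s).const_mul ε)
      refine this.congr_deriv ?_
      simp only [hφddef]; ring
    have hφdt' : φd t' = 0 :=
      hlocmax.hasDerivAt_eq_zero (hφderiv t' ht'mem.1 hyt'pos)
    -- second derivative of φ at t'
    have hφdd : HasDerivAt φd (y'' t' - β ^ 2 * z t') t' := by
      have := (hy''d.sub ((hz' t').const_mul (-β))).sub_const ε
      exact this.congr_deriv (by ring)
    have hDpos : 0 < y'' t' - β ^ 2 * z t' := by
      have h6 : y' t' = -β * z t' + ε := by
        simp only [hφddef] at hφdt'; linarith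
      have h7 := hkey t' ht'mem.1
      have h8 : μ₂ * z t' ≤ μ₂ * y t' := mul_le_mul_of_nonneg_left hyzt' hμ.le
      linarith
    -- slope of φd is eventually positive near t'
    have hslope : ∀ᶠ s in 𝓝[<] t', 0 < slope φd t' s := by
      have h8 : Filter.Tendsto (slope φd t') (𝓝[≠] t') (𝓝 (y'' t' - β ^ 2 * z t')) :=
        hasDerivAt_iff_tendsto_slope.mp hφdd
      have h9 : ∀ᶠ s in 𝓝[≠] t', 0 < slope φd t' s :=
        h8.eventually (eventually_gt_nhds hDpos)
      exact h9.filter_mono (nhdsWithin_mono _ (fun s hs => ne_of_lt hs))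
    -- y positive eventually near t'
    have hycontat : ContinuousAt y t' :=
      hcont.continuousAt (Ici_mem_nhds (by linarith))
    have hypos_ev : ∀ᶠ s in 𝓝 t', 0 < y s :=
      hycontat.eventually_mem (Ioi_mem_nhds hyt'pos)
    have hcomb : ∀ᶠ s in 𝓝[<] t',
        0 < slope φd t' s ∧ 0 < y s ∧ 1 < s := by
      filter_upwards [hslope, hypos_ev.filter_mono nhdsWithin_le_nhds,
        (nhdsWithin_le_nhds (Ioi_mem_nhds ht'1) : Set.Ioi (1:ℝ) ∈ 𝓝[<] t')]
        with s h1 h2 h3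
      exact ⟨h1, h2, h3⟩
    obtain ⟨a, haIio, hasub⟩ := mem_nhdsLT_iff_exists_Ioo_subset.mp hcomb
    set a' : ℝ := (a + t') / 2 with ha'def
    have ha'mem : a' ∈ Set.Ioo a t' := by
      constructor <;> simp only [ha'def] <;> [linarith [haIio.out]; linarith [haIio.out]]
    obtain ⟨hsl', hy', h1a'⟩ := hasub ha'mem
    -- φd is negative on Ioo a t'
    have hφdneg : ∀ s ∈ Set.Ioo a t', φd s < 0 := by
      intro s hs
      obtain ⟨hsl, _, _⟩ := hasub hs
      rw [slope_def_field] at hsl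
      rw [hφdt'] at hsl
      by_contra hge
      push_neg at hge
      have hd : s - t' < 0 := by linarith [hs.2]
      have : (φd s - 0) / (s - t') ≤ 0 := div_nonpos_of_nonneg_of_nonpos (by linarith) hd.le
      simp only [div_eq_mul_inv] at hsl this
      linarith [hsl, this]
    -- MVT on [a', t']
    have hmvt : ∃ c ∈ Set.Ioo a' t', φd c = (φ t' - φ a') / (t' - a') := by
      apply exists_hasDerivAt_eq_slope φ φd ha'mem.2
      · intro s hs
        rcases lt_or_eq_of_le hs.2 with h | h
        · have hsin : s ∈ Set.Ioo a t' := ⟨lt_of_lt_of_le ha'mem.1 hs.1, h⟩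
          obtain ⟨_, hy2, h12⟩ := hasub hsin
          exact ((hφderiv s h12.le hy2).continuousAt).continuousWithinAt
        · rw [h]
          exact ((hφderiv t' ht'mem.1 hyt'pos).continuousAt).continuousWithinAt
      · intro s hs
        have hsin : s ∈ Set.Ioo a t' := ⟨lt_trans ha'mem.1 hs.1, hs.2⟩
        obtain ⟨_, hy2, h12⟩ := hasub hsin
        exact hφderiv s h12.le hy2
    obtain ⟨c, hcmem, hceq⟩ := hmvt
    have hcneg : φd c < 0 := hφdneg c ⟨lt_trans ha'mem.1 hcmem.1, hcmem.2⟩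
    have hden : 0 < t' - a' := by linarith [ha'mem.2]
    have hlt : φ t' < φ a' := by
      rw [hceq] at hcneg
      have := (div_neg_iff.mp hcneg)
      rcases this with ⟨_, h2⟩ | ⟨h1, _⟩
      · linarith
      · linarith
    have ha'le : φ a' ≤ φ t' := hmax a' ⟨h1a'.le, le_trans ha'mem.2.le ht'mem.2⟩
    linarith
  -- conclude by letting ε → 0
  intro t ht
  have htpos : (0:ℝ) < t := lt_of_lt_of_le one_pos ht
  have : ∀ η : ℝ, 0 < η → y t ≤ B * Real.exp (-β * (t - 1)) + η := by
    intro η hη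
    have h1 := main (η / t) (div_pos hη htpos) t ht
    have h2 : η / t * t = η := div_mul_cancel₀ η (ne_of_gt htpos)
    rw [h2] at h1
    exact h1
  exact le_of_forall_pos_le_add this
end
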